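/- Let u, v, x, y be non-empty positive words over {a,b,c} with: the first letters of u and y differ; the last letters of x and v differ; x is not a prefix of v and v is not a prefix of x; y is not a suffix of u and u is not a suffix of y. Set w₁ = u*x, w₂ = u*v, w₃ = y*v. Then for all i, j, k ∈ {1,2,3} with i ≠ j, the free group element wᵢ*wⱼ⁻¹ is not the identity and its reduced form has length at least 2. -/

import Mathlib

/-- The positive word associated with a list of letters. -/
def ι (l : List (Fin 3)) : FreeGroup (Fin 3) := (l.map FreeGroup.of).prod

open FreeGroup in
lemma reduce_eq_self {α} [DecidableEq α] :
    ∀ L : List (α × Bool), L.Chain' (fun p q => ¬ (p.1 = q.1 ∧ p.2 = !q.2)) →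
      FreeGroup.reduce L = L := by
  intro L h
  induction L with
  | nil => rfl
  | cons x L ih =>
    rw [FreeGroup.reduce.cons, ih h.tail]
    cases L with
    | nil => rfl
    | cons hd tl =>
      have := List.isChain_cons_cons.1 h
      simp only [if_neg this.1]

lemma ι_eq (l : List (Fin 3)) : ι l = FreeGroup.mk (l.map (fun a => (a, true))) := by
  induction l with
  | nil => simp [ι, FreeGroup.one_eq_mk]
  | cons a l ih =>
    simp only [ι, List.map_cons, List.prod_cons] at *
    rw [ih, FreeGroup.of, FreeGroup.mul_mk]
    rfl

lemma chain'_const (l : List (Fin 3)) (b : Bool) :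
    List.Chain' (fun p q : (Fin 3) × Bool => ¬ (p.1 = q.1 ∧ p.2 = !q.2))
      (l.map (fun a => (a, b))) := by
  induction l with
  | nil => simp [List.Chain']
  | cons a l ih =>
    cases l with
    | nil => simp [List.Chain']
    | cons c l =>
      refine List.isChain_cons_cons.2 ⟨?_, ih⟩
      simp

lemma ι_append (a b : List (Fin 3)) : ι (a ++ b) = ι a * ι b := by
  simp [ι]

lemma noCancel (A B : List (Fin 3)) (hA : A ≠ []) (hB : B ≠ [])
    (h : A.getLast? ≠ B.getLast?) :
    (ι A * (ι B)⁻¹).toWord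
      = A.map (fun a => (a, true)) ++ (B.reverse.map (fun a => (a, false))) := by
  rw [ι_eq, ι_eq, FreeGroup.inv_mk, FreeGroup.mul_mk, FreeGroup.toWord_mk]
  have hinv : FreeGroup.invRev (B.map (fun a => (a, true)))
      = B.reverse.map (fun a => (a, false)) := by
    simp [FreeGroup.invRev, List.map_reverse, Function.comp_def]
  rw [hinv]
  apply reduce_eq_self
  refine List.isChain_append.2 ?_
  refine ⟨chain'_const _ _, chain'_const _ _, ?_⟩
  intro p hp q hq
  simp only [List.getLast?_map, Option.mem_def, Option.map_eq_some_iff] at hp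
  simp only [List.head?_map, List.head?_reverse, Option.mem_def, Option.map_eq_some_iff] at hq
  obtain ⟨a, ha, rfl⟩ := hp
  obtain ⟨b, hb, rfl⟩ := hq
  simp only [not_and]
  intro hab
  exfalso
  exact h (by rw [ha, hb, hab])

lemma noCancel_len (A B : List (Fin 3)) (hA : A ≠ []) (hB : B ≠ [])
    (h : A.getLast? ≠ B.getLast?) :
    2 ≤ (ι A * (ι B)⁻¹).toWord.length := by
  rw [noCancel A B hA hB h]
  simp only [List.length_append, List.length_map, List.length_reverse]
  have := List.length_pos_iff.2 hA
  have := List.length_pos_iff.2 hB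
  omega

lemma suffCase (u y : List (Fin 3)) (hu : u ≠ []) (hy : y ≠ [])
    (h5 : ¬ y <:+ u) (h6 : ¬ u <:+ y) :
    2 ≤ (ι u * (ι y)⁻¹).toWord.length := by
  obtain ⟨n, hn⟩ : ∃ n, u.length + y.length = n := ⟨_, rfl⟩
  induction n using Nat.strong_induction_on generalizing u y with
  | _ n ih =>
  by_cases h : u.getLast? = y.getLast?
  · -- strip common last letter
    obtain ⟨u', c, rfl⟩ := u.eq_nil_or_concat.resolve_left hu
    obtain ⟨y', d, rfl⟩ := y.eq_nil_or_concat.resolve_left hy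
    simp only [List.concat_eq_append] at hu hy h5 h6 hn h ⊢
    rw [List.getLast?_concat, List.getLast?_concat] at h
    obtain rfl : c = d := by simpa using h
    have hu' : u' ≠ [] := by
      rintro rfl
      exact h6 ⟨y', by simp⟩
    have hy' : y' ≠ [] := by
      rintro rfl
      exact h5 ⟨u', by simp⟩
    have h5' : ¬ y' <:+ u' := fun ⟨t, ht⟩ => h5 ⟨t, by rw [← List.append_assoc, ht]⟩
    have h6' : ¬ u' <:+ y' := fun ⟨t, ht⟩ => h6 ⟨t, by rw [← List.append_assoc, ht]⟩
    have key : ι (u' ++ [c]) * (ι (y' ++ [c]))⁻¹ = ι u' * (ι y')⁻¹ := by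
      rw [ι_append, ι_append, mul_inv_rev]
      group
    rw [key]
    exact ih (u'.length + y'.length) (by simp at hn ⊢; omega) u' y' hu' hy' h5' h6' rfl
  · exact noCancel_len u y hu hy h

lemma ne_one_of_len {g : FreeGroup (Fin 3)} (h : 2 ≤ g.toWord.length) : g ≠ 1 := by
  intro hg
  rw [hg, FreeGroup.toWord_one] at h
  simp at h

/-- under the cancellation-control hypotheses on u, v, x, y, the words
w₁ = ux, w₂ = uv, w₃ = yv satisfy: wᵢ wⱼ⁻¹ ≠ 1 and has reduced length ≥ 2 for i ≠ j. -/
theorem stmt_19 (u v x y : List (Fin 3))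
    (hu : u ≠ []) (hv : v ≠ []) (hx : x ≠ []) (hy : y ≠ [])
    (h1 : u.head? ≠ y.head?) (h2 : x.getLast? ≠ v.getLast?)
    (h3 : ¬ x <+: v) (h4 : ¬ v <+: x)
    (h5 : ¬ y <:+ u) (h6 : ¬ u <:+ y)
    (W : Fin 3 → FreeGroup (Fin 3))
    (hW : W = ![ι (u ++ x), ι (u ++ v), ι (y ++ v)]) :
    ∀ i j : Fin 3, i ≠ j →
      W i * (W j)⁻¹ ≠ 1 ∧ 2 ≤ (W i * (W j)⁻¹).toWord.length := by
  subst hW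
  have lastux : (u ++ x).getLast? = x.getLast? := List.getLast?_append_of_ne_nil u hx
  have lastuv : (u ++ v).getLast? = v.getLast? := List.getLast?_append_of_ne_nil u hv
  have lastyv : (y ++ v).getLast? = v.getLast? := List.getLast?_append_of_ne_nil y hv
  have key23 : ι (u ++ v) * (ι (y ++ v))⁻¹ = ι u * (ι y)⁻¹ := by
    rw [ι_append, ι_append, mul_inv_rev]; group
  have key32 : ι (y ++ v) * (ι (u ++ v))⁻¹ = ι y * (ι u)⁻¹ := by
    rw [ι_append, ι_append, mul_inv_rev]; group
  intro i j hij
  have hne : ∀ g : FreeGroup (Fin 3), 2 ≤ g.toWord.length → g ≠ 1 ∧ 2 ≤ g.toWord.length :=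
    fun g h => ⟨ne_one_of_len h, h⟩
  fin_cases i <;> fin_cases j <;> (try exact absurd rfl hij) <;>
    simp only [Fin.isValue, Matrix.cons_val_zero, Matrix.cons_val_one, Matrix.head_cons,
      Matrix.cons_val_two, Matrix.tail_cons]
  · exact hne _ (noCancel_len (u ++ x) (u ++ v) (by simp [hx]) (by simp [hv])
      (by rw [lastux, lastuv]; exact h2))
  · exact hne _ (noCancel_len (u ++ x) (y ++ v) (by simp [hx]) (by simp [hv])
      (by rw [lastux, lastyv]; exact h2))
  · exact hne _ (noCancel_len (u ++ v) (u ++ x) (by simp [hv]) (by simp [hx])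
      (by rw [lastuv, lastux]; exact Ne.symm h2))
  · refine hne _ ?_
    show 2 ≤ (ι (u ++ v) * (ι (y ++ v))⁻¹).toWord.length
    rw [key23]; exact suffCase u y hu hy h5 h6
  · exact hne _ (noCancel_len (y ++ v) (u ++ x) (by simp [hv]) (by simp [hx])
      (by rw [lastyv, lastux]; exact Ne.symm h2))
  · refine hne _ ?_
    show 2 ≤ (ι (y ++ v) * (ι (u ++ v))⁻¹).toWord.length
    rw [key32]; exact suffCase y u hy hu h6 h5
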